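/- Let G be a right partially ordered group (a ≤ b implies ac ≤ bc for all c) with identity e and positive cone G⁺ = {x ∈ G : x > e}, and let 𝒥 be the set of all downward closed nonempty finite subsets of G⁺, with associated density σ_𝒥. Let A and B be subsets of G⁺ with σ_𝒥(A) = α and σ_𝒥(B) = β. Suppose that for every J ∈ 𝒥 and every x ∈ J \ B, the set B*(x) = {b ∈ B : b < x} is nonempty and finite. Then σ_𝒥(AB) ≥ α + β − αβ. -/

import Mathlib

/-- A subset `S` of the positive cone `G⁺ = {x : 1 < x}` is downward closed if
`x ∈ S` implies `(e, x) ⊆ S`. -/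
def DownwardClosed {G : Type*} [Group G] [PartialOrder G] (S : Set G) : Prop :=
  S ⊆ Set.Ioi 1 ∧ ∀ x ∈ S, Set.Ioo (1 : G) x ⊆ S

/-- The collection of all downward closed nonempty finite subsets of the
positive cone of `G`. -/
def goodJ (G : Type*) [Group G] [PartialOrder G] : Set (Set G) :=
  {J | J.Nonempty ∧ J.Finite ∧ DownwardClosed J}

/-- The density `σ_𝒥(A) = inf { |A ∩ J| / |J| : J ∈ 𝒥 }` determined by a
collection `𝒥` of subsets of `X`. -/
noncomputable def densJ {X : Type*} (𝒥 : Set (Set X)) (A : Set X) : ℝ :=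
  sInf ((fun J => ((A ∩ J).ncard : ℝ) / (J.ncard : ℝ)) '' 𝒥)

/-- The product set `AB = {ab : a ∈ A ∪ {e}, b ∈ B ∪ {e}}`. -/
def prodset {G : Type*} [Group G] (A B : Set G) : Set G :=
  {g | ∃ a ∈ A ∪ {1}, ∃ b ∈ B ∪ {1}, a * b = g}

private lemma densJ_le' {X : Type*} (𝒥 : Set (Set X)) (A : Set X) {L : Set X} (hL : L ∈ 𝒥) :
    densJ 𝒥 A ≤ ((A ∩ L).ncard : ℝ) / (L.ncard : ℝ) := by
  apply csInf_le
  · refine ⟨0, ?_⟩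
    rintro r ⟨J, hJ, rfl⟩
    positivity
  · exact ⟨L, hL, rfl⟩

private lemma densJ_card_le {G : Type*} [Group G] [PartialOrder G] (A : Set G) {L : Set G}
    (hL : L ∈ goodJ G) :
    densJ (goodJ G) A * (L.ncard : ℝ) ≤ ((A ∩ L).ncard : ℝ) := by
  have hpos : (0:ℝ) < (L.ncard : ℝ) := by
    exact_mod_cast (Set.ncard_pos hL.2.1).2 hL.1
  have h := densJ_le' (goodJ G) A hL
  rw [le_div_iff₀ hpos] at h
  exact h

private lemma mulr_lt {G : Type*} [Group G] [PartialOrder G]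
    [CovariantClass G G (Function.swap (· * ·)) (· ≤ ·)]
    {a b : G} (h : a < b) (c : G) : a * c < b * c :=
  lt_of_le_of_ne (mul_le_mul_left h.le c) fun e => h.ne (mul_right_cancel e)

open Classical in
private lemma key_count {G : Type*} [Group G] [PartialOrder G]
    [CovariantClass G G (Function.swap (· * ·)) (· ≤ ·)]
    (A B : Set G) (hB : B ⊆ Set.Ioi 1)
    {J : Set G} (hJ : J ∈ goodJ G)
    (hBx : ∀ x ∈ J \ B, (B ∩ Set.Iio x).Nonempty ∧ (B ∩ Set.Iio x).Finite) :
    densJ (goodJ G) A * (((J \ B)).ncard : ℝ) ≤ ((prodset A B ∩ (J \ B)).ncard : ℝ) := by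
  obtain ⟨hJne, hJfin, hJsub, hJioo⟩ := hJ
  set α := densJ (goodJ G) A with hαdef
  set D : Set G := J \ B with hD
  have hDfin : D.Finite := hJfin.subset Set.diff_subset
  set f : G → LinearExtension G := fun x => toLinearExtension x with hf
  have hfmono : ∀ {a b : G}, a < b → f a < f b := by
    intro a b hab
    exact lt_of_le_of_ne (toLinearExtension.monotone hab.le) fun e => hab.ne (by exact e)
  have exmax : ∀ (S : Set G), S.Finite → S.Nonempty → ∃ a ∈ S, ∀ c ∈ S, f c ≤ f a := by
    intro S hfin hne
    obtain ⟨a, haS, ha⟩ := Set.Finite.exists_maximalFor f S hfin hne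
    refine ⟨a, haS, fun c hc => ?_⟩
    rcases le_or_gt (f c) (f a) with h | h
    · exact h
    · exact (ha hc h.le).ge
  set φ : G → G := fun x =>
    if h : (B ∩ Set.Iio x).Finite ∧ (B ∩ Set.Iio x).Nonempty then
      (exmax _ h.1 h.2).choose else 1 with hφ
  have hφspec : ∀ x ∈ D, φ x ∈ B ∧ φ x < x ∧ ∀ c ∈ B, c < x → f c ≤ f (φ x) := by
    intro x hx
    have h := hBx x hx
    have h' : (B ∩ Set.Iio x).Finite ∧ (B ∩ Set.Iio x).Nonempty := ⟨h.2, h.1⟩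
    have hs := (exmax _ h'.1 h'.2).choose_spec
    simp only [hφ, dif_pos h']
    exact ⟨hs.1.1, hs.1.2, fun c hc hcx => hs.2 c ⟨hc, hcx⟩⟩
  have hstep : ∀ x ∈ D, ∀ z : G, φ x < z → z < x → z ∈ D ∧ φ z = φ x := by
    intro x hx z h1 h2
    obtain ⟨hbB, hbx, hmax⟩ := hφspec x hx
    have hz1 : (1:G) < z := lt_trans (hB hbB) h1
    have hzJ : z ∈ J := hJioo x hx.1 ⟨hz1, h2⟩
    have hzB : z ∉ B := fun hzB => absurd (hmax z hzB h2) (not_le.2 (hfmono h1))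
    have hzD : z ∈ D := ⟨hzJ, hzB⟩
    obtain ⟨hb'B, hb'z, hmax'⟩ := hφspec z hzD
    have e1 : f (φ x) ≤ f (φ z) := hmax' _ hbB h1
    have e2 : f (φ z) ≤ f (φ x) := hmax _ hb'B (lt_trans hb'z h2)
    have e3 : f (φ z) = f (φ x) := le_antisymm e2 e1
    exact ⟨hzD, e3⟩
  -- Finset setup
  set Df : Finset G := hDfin.toFinset with hDfdef
  have hmemDf : ∀ {x : G}, x ∈ Df ↔ x ∈ D := fun {x} => hDfin.mem_toFinset
  set T : Finset G := Df.image φ with hT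
  set s₁ : Finset G := Df.filter (fun x => x ∈ prodset A B) with hs₁
  have hsum1 : s₁.card = ∑ b ∈ T, (s₁.filter (fun x => φ x = b)).card :=
    Finset.card_eq_sum_card_fiberwise
      (fun x hx => Finset.mem_image_of_mem φ (Finset.mem_filter.1 hx).1)
  have hsum2 : Df.card = ∑ b ∈ T, (Df.filter (fun x => φ x = b)).card :=
    Finset.card_eq_sum_card_fiberwise (fun x hx => Finset.mem_image_of_mem φ hx)
  have hper : ∀ b ∈ T, α * ((Df.filter (fun x => φ x = b)).card : ℝ)
      ≤ ((s₁.filter (fun x => φ x = b)).card : ℝ) := by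
    intro b hbT
    set Db : Finset G := Df.filter (fun x => φ x = b) with hDb
    have hmem : ∀ {x : G}, x ∈ Db → x ∈ D ∧ φ x = b := fun {x} hx =>
      ⟨hmemDf.1 (Finset.mem_filter.1 hx).1, (Finset.mem_filter.1 hx).2⟩
    obtain ⟨x₀, hx₀Df, hx₀b⟩ := Finset.mem_image.1 hbT
    have hx₀D : x₀ ∈ D := hmemDf.1 hx₀Df
    have hx₀Db : x₀ ∈ Db := Finset.mem_filter.2 ⟨hx₀Df, hx₀b⟩
    have hbB : b ∈ B := hx₀b ▸ (hφspec x₀ hx₀D).1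
    have hb1 : (1:G) < b := hB hbB
    have hbx : ∀ {x : G}, x ∈ Db → b < x := fun {x} hx => by
      obtain ⟨hxD, hφx⟩ := hmem hx
      exact hφx ▸ (hφspec x hxD).2.1
    set Lb : Set G := (fun y => y * b⁻¹) '' (Db : Set G) with hLbdef
    have hmemLb : ∀ {y : G}, y ∈ Lb ↔ y * b ∈ Db := by
      intro y
      constructor
      · rintro ⟨x, hx, rfl⟩
        simpa [inv_mul_cancel_right] using hx
      · intro h
        exact ⟨y * b, h, by simp [mul_inv_cancel_right]⟩
    have hLbcard : Lb.ncard = Db.card := by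
      rw [hLbdef, Set.ncard_image_of_injective _ (mul_left_injective b⁻¹), Set.ncard_coe_finset]
    have hLbgood : Lb ∈ goodJ G := by
      refine ⟨⟨x₀ * b⁻¹, Set.mem_image_of_mem _ hx₀Db⟩, (Db : Set G).toFinite.image _, ?_, ?_⟩
      · rintro y ⟨x, hx, rfl⟩
        have hbxx : b < x := hbx hx
        have := mulr_lt hbxx b⁻¹
        simpa using this
      · rintro y hyLb y' ⟨hy'1, hy'y⟩
        have hx : y * b ∈ Db := hmemLb.1 hyLb
        obtain ⟨hxD, hφx⟩ := hmem hx
        have h1 : b < y' * b := by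
          have := mulr_lt hy'1 b
          simpa using this
        have h2 : y' * b < y * b := mulr_lt hy'y b
        have hz := hstep (y * b) hxD (y' * b) (by rw [hφx]; exact h1) h2
        have hzDb : y' * b ∈ Db := Finset.mem_filter.2 ⟨hmemDf.2 hz.1, hz.2.trans hφx⟩
        exact hmemLb.2 hzDb
    have himg : (fun y => y * b) '' (A ∩ Lb) ⊆ ((s₁.filter (fun x => φ x = b)) : Set G) := by
      rintro _ ⟨y, ⟨hyA, hyLb⟩, rfl⟩
      have hyb : y * b ∈ Db := hmemLb.1 hyLb
      have hybP : y * b ∈ prodset A B := ⟨y, Or.inl hyA, b, Or.inl hbB, rfl⟩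
      have h1 : y * b ∈ s₁ := Finset.mem_filter.2 ⟨(Finset.mem_filter.1 hyb).1, hybP⟩
      exact Finset.mem_coe.2 (Finset.mem_filter.2 ⟨h1, (Finset.mem_filter.1 hyb).2⟩)
    have hcard2 : (A ∩ Lb).ncard ≤ (s₁.filter (fun x => φ x = b)).card := by
      calc (A ∩ Lb).ncard = ((fun y => y * b) '' (A ∩ Lb)).ncard :=
            (Set.ncard_image_of_injective _ (mul_left_injective b)).symm
        _ ≤ (((s₁.filter (fun x => φ x = b)) : Set G)).ncard :=
            Set.ncard_le_ncard himg (Finset.finite_toSet _)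
        _ = _ := Set.ncard_coe_finset _
    calc α * ((Db.card : ℕ) : ℝ) = α * (Lb.ncard : ℝ) := by rw [hLbcard]
      _ ≤ ((A ∩ Lb).ncard : ℝ) := densJ_card_le A hLbgood
      _ ≤ _ := by exact_mod_cast hcard2
  have hmain : α * (Df.card : ℝ) ≤ (s₁.card : ℝ) := by
    rw [hsum1, hsum2]
    push_cast
    rw [Finset.mul_sum]
    exact Finset.sum_le_sum hper
  have e1 : D.ncard = Df.card := by
    rw [hDfdef]; exact (Set.ncard_eq_toFinset_card _ hDfin)
  have e2 : (prodset A B ∩ D).ncard = s₁.card := by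
    have : prodset A B ∩ D = (s₁ : Set G) := by
      ext x
      simp only [hs₁, Finset.coe_filter, Set.mem_setOf_eq, Set.mem_inter_iff, Finset.mem_coe]
      rw [hmemDf]
      tauto
    rw [this, Set.ncard_coe_finset]
  rw [e1, e2]
  exact hmain

/-- Shnirel'man's inequality in a right partially ordered group:
`σ_𝒥(AB) ≥ α + β - αβ`. -/
theorem densJ_prodset_ge_right
    {G : Type*} [Group G] [PartialOrder G]
    [CovariantClass G G (Function.swap (· * ·)) (· ≤ ·)]
    (A B : Set G) (hA : A ⊆ Set.Ioi 1) (hB : B ⊆ Set.Ioi 1)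
    (α β : ℝ) (hα : densJ (goodJ G) A = α) (hβ : densJ (goodJ G) B = β)
    (hBx : ∀ J ∈ goodJ G, ∀ x ∈ J \ B,
      (B ∩ Set.Iio x).Nonempty ∧ (B ∩ Set.Iio x).Finite) :
    densJ (goodJ G) (prodset A B) ≥ α + β - α * β := by
  subst hα hβ
  set α := densJ (goodJ G) A with hαdef
  set β := densJ (goodJ G) B with hβdef
  rcases Set.eq_empty_or_nonempty (goodJ G) with hemp | hne
  · simp [hαdef, hβdef, densJ, hemp, Real.sInf_empty]
  · rw [ge_iff_le, densJ]
    apply le_csInf (hne.image _)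
    rintro r ⟨J, hJ, rfl⟩
    obtain ⟨hJne, hJfin, hJsub, hJioo⟩ := hJ
    have hJ' : J ∈ goodJ G := ⟨hJne, hJfin, hJsub, hJioo⟩
    have hJpos : (0:ℝ) < (J.ncard : ℝ) := by
      exact_mod_cast (Set.ncard_pos hJfin).2 hJne
    rw [le_div_iff₀ hJpos]
    -- facts
    have hα1 : α ≤ 1 := by
      have h := densJ_le' (goodJ G) A hJ'
      refine h.trans ?_
      rw [div_le_one hJpos]
      exact_mod_cast Set.ncard_le_ncard Set.inter_subset_right hJfin
    have hβJ : β * (J.ncard : ℝ) ≤ ((B ∩ J).ncard : ℝ) := densJ_card_le B hJ'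
    have hkey : α * (((J \ B)).ncard : ℝ) ≤ ((prodset A B ∩ (J \ B)).ncard : ℝ) :=
      key_count A B hB hJ' (hBx J hJ')
    have hsplitset : prodset A B ∩ J = (B ∩ J) ∪ (prodset A B ∩ (J \ B)) := by
      ext x
      constructor
      · rintro ⟨hxP, hxJ⟩
        by_cases hxB : x ∈ B
        · exact Or.inl ⟨hxB, hxJ⟩
        · exact Or.inr ⟨hxP, hxJ, hxB⟩
      · rintro (⟨hxB, hxJ⟩ | ⟨hxP, hxJ, hxB⟩)
        · exact ⟨⟨1, Or.inr rfl, x, Or.inl hxB, one_mul x⟩, hxJ⟩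
        · exact ⟨hxP, hxJ⟩
    have hdisj : Disjoint (B ∩ J) (prodset A B ∩ (J \ B)) := by
      rw [Set.disjoint_left]
      rintro x ⟨hxB, -⟩ ⟨-, -, hxB'⟩
      exact hxB' hxB
    have hsplit : (prodset A B ∩ J).ncard = (B ∩ J).ncard + (prodset A B ∩ (J \ B)).ncard := by
      rw [hsplitset]
      exact Set.ncard_union_eq hdisj (hJfin.subset Set.inter_subset_right)
        ((hJfin.subset Set.diff_subset).subset Set.inter_subset_right)
    have hcardJ : (J ∩ B).ncard + (J \ B).ncard = J.ncard :=
      Set.ncard_inter_add_ncard_diff_eq_ncard J B hJfin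
    have hBJcomm : (B ∩ J).ncard = (J ∩ B).ncard := by rw [Set.inter_comm]
    -- to reals
    have hsplitR : ((prodset A B ∩ J).ncard : ℝ)
        = ((B ∩ J).ncard : ℝ) + ((prodset A B ∩ (J \ B)).ncard : ℝ) := by
      exact_mod_cast congrArg (fun n : ℕ => (n : ℝ)) hsplit
    have hcardJR : ((B ∩ J).ncard : ℝ) + (((J \ B)).ncard : ℝ) = (J.ncard : ℝ) := by
      rw [hBJcomm]
      exact_mod_cast congrArg (fun n : ℕ => (n : ℝ)) hcardJ
    nlinarith [mul_nonneg (sub_nonneg.2 hα1) (sub_nonneg.2 hβJ)]
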